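/- Let 0 < q < 1 and let n be a nonnegative integer. For every triple of nonnegative integers (i, j, k) with i + j + k = n, there exist nonnegative real numbers a_{rst} ≥ 0, indexed by nonnegative integers r, s, t with r + s + t = n, such that for all real u, v: B^n_{ijk}(u,v) = Σ_{r+s+t=n} a_{rst} · b^n_{rst}(u,v). Equivalently, the matrix A of change of bases expressing the triangular q-Bernstein polynomials in terms of the classical triangular Bernstein polynomials of degree n has all entries nonnegative. -/

import Mathlib

open Finset

/-- The q-integer [r] = 1 + q + ... + q^(r-1). -/
noncomputable def qInt (q : ℝ) (r : ℕ) : ℝ := ∑ s ∈ Finset.range r, q ^ s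

/-- The q-factorial [r]!. -/
noncomputable def qFact (q : ℝ) : ℕ → ℝ
  | 0 => 1
  | r + 1 => qInt q (r + 1) * qFact q r

/-- The q-binomial coefficient [i choose j]_q (zero unless i ≥ j ≥ 0). -/
noncomputable def qBinom (q : ℝ) (i j : ℕ) : ℝ :=
  if j ≤ i then qFact q i / (qFact q j * qFact q (i - j)) else 0

/-- The q-binomial coefficient with integer indices, zero unless i ≥ j ≥ 0. -/
noncomputable def qBinomZ (q : ℝ) (i j : ℤ) : ℝ :=
  if 0 ≤ j ∧ j ≤ i then qFact q i.toNat / (qFact q j.toNat * qFact q (i - j).toNat) else 0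

/-- The triangular q-Bernstein polynomial B^n_{ijk}(u,v)
    (meaningful for i + j + k = n). -/
noncomputable def triB (q : ℝ) (n i j k : ℕ) (u v : ℝ) : ℝ :=
  qBinom q n k * (Nat.choose (i + j) i : ℝ) * u ^ i * v ^ j *
    ∏ s ∈ Finset.range k, (1 - q ^ s * u - q ^ s * v)

/-- The triangular q-Bernstein polynomial with integer indices; by convention it is
    zero whenever any of the indices is negative. -/
noncomputable def triBZ (q : ℝ) (n : ℕ) (i j k : ℤ) (u v : ℝ) : ℝ :=
  if 0 ≤ i ∧ 0 ≤ j ∧ 0 ≤ k then triB q n i.toNat j.toNat k.toNat u v else 0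

/-- The classical triangular Bernstein polynomial b^n_{ijk}(u,v). -/
noncomputable def triBern (n i j k : ℕ) (u v : ℝ) : ℝ :=
  (Nat.factorial n : ℝ) /
      ((Nat.factorial i : ℝ) * (Nat.factorial j : ℝ) * (Nat.factorial k : ℝ)) *
    u ^ i * v ^ j * (1 - u - v) ^ k

/-- The set of triples (i, j, k) of nonnegative integers with i + j + k = n. -/
def simplex (n : ℕ) : Finset (ℕ × ℕ × ℕ) :=
  (Finset.range (n + 1) ×ˢ Finset.range (n + 1) ×ˢ Finset.range (n + 1)).filter
    (fun p => p.1 + p.2.1 + p.2.2 = n)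

lemma mem_simplex {n : ℕ} {p : ℕ × ℕ × ℕ} : p ∈ simplex n ↔ p.1 + p.2.1 + p.2.2 = n := by
  simp only [simplex, Finset.mem_filter, Finset.mem_product, Finset.mem_range]
  omega

lemma sum_shift_aux (k m : ℕ) (c M : ℕ × ℕ × ℕ → ℝ) (hcz : ∀ p, p ∉ simplex k → c p = 0)
    (e r : ℕ × ℕ × ℕ → ℕ × ℕ × ℕ) (cond : ℕ × ℕ × ℕ → Prop) [DecidablePred cond]
    (he : ∀ p ∈ simplex k, e p ∈ simplex m)
    (her : ∀ p, r (e p) = p) (hcond : ∀ p, cond (e p))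
    (hre : ∀ p, cond p → e (r p) = p) :
    ∑ p ∈ simplex m, (if cond p then c (r p) else 0) * M p
      = ∑ p ∈ simplex k, c p * M (e p) := by
  have h1 : ∑ p ∈ (simplex k).image e, (if cond p then c (r p) else 0) * M p
      = ∑ p ∈ simplex k, (if cond (e p) then c (r (e p)) else 0) * M (e p) :=
    Finset.sum_image (fun a _ b _ h => by rw [← her a, h, her])
  have h2 : ∑ p ∈ (simplex k).image e, (if cond p then c (r p) else 0) * M p
      = ∑ p ∈ simplex m, (if cond p then c (r p) else 0) * M p := by
    refine Finset.sum_subset ?_ ?_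
    · intro p hp
      obtain ⟨x, hx, rfl⟩ := Finset.mem_image.1 hp
      exact he x hx
    · intro p _ hnp
      by_cases hcp : cond p
      · have hc : c (r p) = 0 := by
          apply hcz
          intro hrp
          exact hnp (Finset.mem_image.2 ⟨r p, hrp, hre p hcp⟩)
        simp [hcp, hc]
      · simp [hcp]
  rw [← h2, h1]
  refine Finset.sum_congr rfl (fun p _ => ?_)
  rw [her, if_pos (hcond p)]

lemma prod_expand (q : ℝ) (hq0 : 0 < q) (hq1 : q < 1) (k : ℕ) :
    ∃ c : ℕ × ℕ × ℕ → ℝ, (∀ p, 0 ≤ c p) ∧ (∀ p, p ∉ simplex k → c p = 0) ∧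
      ∀ u v : ℝ, ∏ s ∈ Finset.range k, (1 - q ^ s * u - q ^ s * v) =
        ∑ p ∈ simplex k, c p * (u ^ p.1 * v ^ p.2.1 * (1 - u - v) ^ p.2.2) := by
  induction k with
  | zero =>
    refine ⟨fun p => if p = (0, 0, 0) then 1 else 0, ?_, ?_, ?_⟩
    · intro p
      dsimp only
      split <;> norm_num
    · intro p hp
      dsimp only
      rw [if_neg]
      rintro rfl
      exact hp (mem_simplex.2 rfl)
    · intro u v
      have h0 : simplex 0 = {((0 : ℕ), (0 : ℕ), (0 : ℕ))} := by
        ext ⟨a, b, t⟩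
        simp only [mem_simplex, Finset.mem_singleton, Prod.ext_iff]
        omega
      simp [h0]
  | succ k ih =>
    obtain ⟨c, hc0, hcz, hce⟩ := ih
    have hqk : (0 : ℝ) ≤ 1 - q ^ k := by
      have := pow_le_one₀ hq0.le hq1.le (n := k)
      linarith
    refine ⟨fun p => (1 - q ^ k) * (if 1 ≤ p.1 then c (p.1 - 1, p.2.1, p.2.2) else 0)
        + (1 - q ^ k) * (if 1 ≤ p.2.1 then c (p.1, p.2.1 - 1, p.2.2) else 0)
        + (if 1 ≤ p.2.2 then c (p.1, p.2.1, p.2.2 - 1) else 0), ?_, ?_, ?_⟩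
    · intro p
      have A : ∀ (b : Prop) [Decidable b] (x : ℕ × ℕ × ℕ), (0:ℝ) ≤ if b then c x else 0 := by
        intro b _ x
        split
        · exact hc0 x
        · exact le_rfl
      exact add_nonneg (add_nonneg (mul_nonneg hqk (A _ _)) (mul_nonneg hqk (A _ _))) (A _ _)
    · intro p hp
      dsimp only
      rw [mem_simplex] at hp
      have e1 : (if 1 ≤ p.1 then c (p.1 - 1, p.2.1, p.2.2) else 0) = 0 := by
        split
        · apply hcz; rw [mem_simplex]; simp only; omega
        · rfl
      have e2 : (if 1 ≤ p.2.1 then c (p.1, p.2.1 - 1, p.2.2) else 0) = 0 := by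
        split
        · apply hcz; rw [mem_simplex]; simp only; omega
        · rfl
      have e3 : (if 1 ≤ p.2.2 then c (p.1, p.2.1, p.2.2 - 1) else 0) = 0 := by
        split
        · apply hcz; rw [mem_simplex]; simp only; omega
        · rfl
      rw [e1, e2, e3]; ring
    · intro u v
      have hA : ∑ p ∈ simplex (k+1), (if 1 ≤ p.1 then c (p.1 - 1, p.2.1, p.2.2) else 0) *
            (u ^ p.1 * v ^ p.2.1 * (1 - u - v) ^ p.2.2)
          = ∑ p ∈ simplex k, c p * (u ^ (p.1 + 1) * v ^ p.2.1 * (1 - u - v) ^ p.2.2) :=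
        sum_shift_aux k (k+1) c (fun p => u ^ p.1 * v ^ p.2.1 * (1 - u - v) ^ p.2.2) hcz
          (fun p => (p.1 + 1, p.2.1, p.2.2)) (fun p => (p.1 - 1, p.2.1, p.2.2))
          (fun p => 1 ≤ p.1)
          (by intro p hp; rw [mem_simplex] at *; simp only; omega)
          (by intro p; simp)
          (by intro p; simp)
          (by rintro ⟨a, b, t⟩ h; dsimp only at h ⊢; rw [Nat.sub_add_cancel h])
      have hB : ∑ p ∈ simplex (k+1), (if 1 ≤ p.2.1 then c (p.1, p.2.1 - 1, p.2.2) else 0) *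
            (u ^ p.1 * v ^ p.2.1 * (1 - u - v) ^ p.2.2)
          = ∑ p ∈ simplex k, c p * (u ^ p.1 * v ^ (p.2.1 + 1) * (1 - u - v) ^ p.2.2) :=
        sum_shift_aux k (k+1) c (fun p => u ^ p.1 * v ^ p.2.1 * (1 - u - v) ^ p.2.2) hcz
          (fun p => (p.1, p.2.1 + 1, p.2.2)) (fun p => (p.1, p.2.1 - 1, p.2.2))
          (fun p => 1 ≤ p.2.1)
          (by intro p hp; rw [mem_simplex] at *; simp only; omega)
          (by intro p; simp)
          (by intro p; simp)
          (by rintro ⟨a, b, t⟩ h; dsimp only at h ⊢; rw [Nat.sub_add_cancel h])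
      have hC : ∑ p ∈ simplex (k+1), (if 1 ≤ p.2.2 then c (p.1, p.2.1, p.2.2 - 1) else 0) *
            (u ^ p.1 * v ^ p.2.1 * (1 - u - v) ^ p.2.2)
          = ∑ p ∈ simplex k, c p * (u ^ p.1 * v ^ p.2.1 * (1 - u - v) ^ (p.2.2 + 1)) :=
        sum_shift_aux k (k+1) c (fun p => u ^ p.1 * v ^ p.2.1 * (1 - u - v) ^ p.2.2) hcz
          (fun p => (p.1, p.2.1, p.2.2 + 1)) (fun p => (p.1, p.2.1, p.2.2 - 1))
          (fun p => 1 ≤ p.2.2)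
          (by intro p hp; rw [mem_simplex] at *; simp only; omega)
          (by intro p; simp)
          (by intro p; simp)
          (by rintro ⟨a, b, t⟩ h; dsimp only at h ⊢; rw [Nat.sub_add_cancel h])
      rw [Finset.prod_range_succ, hce u v]
      symm
      calc ∑ p ∈ simplex (k+1),
            ((1 - q ^ k) * (if 1 ≤ p.1 then c (p.1 - 1, p.2.1, p.2.2) else 0)
            + (1 - q ^ k) * (if 1 ≤ p.2.1 then c (p.1, p.2.1 - 1, p.2.2) else 0)
            + (if 1 ≤ p.2.2 then c (p.1, p.2.1, p.2.2 - 1) else 0)) *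
              (u ^ p.1 * v ^ p.2.1 * (1 - u - v) ^ p.2.2)
          = (1 - q ^ k) * ∑ p ∈ simplex (k+1),
              (if 1 ≤ p.1 then c (p.1 - 1, p.2.1, p.2.2) else 0) *
                (u ^ p.1 * v ^ p.2.1 * (1 - u - v) ^ p.2.2)
            + (1 - q ^ k) * ∑ p ∈ simplex (k+1),
              (if 1 ≤ p.2.1 then c (p.1, p.2.1 - 1, p.2.2) else 0) *
                (u ^ p.1 * v ^ p.2.1 * (1 - u - v) ^ p.2.2)
            + ∑ p ∈ simplex (k+1),
              (if 1 ≤ p.2.2 then c (p.1, p.2.1, p.2.2 - 1) else 0) *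
                (u ^ p.1 * v ^ p.2.1 * (1 - u - v) ^ p.2.2) := by
            rw [Finset.mul_sum, Finset.mul_sum, ← Finset.sum_add_distrib,
              ← Finset.sum_add_distrib]
            exact Finset.sum_congr rfl (fun p _ => by ring)
        _ = (1 - q ^ k) * ∑ p ∈ simplex k,
              c p * (u ^ (p.1 + 1) * v ^ p.2.1 * (1 - u - v) ^ p.2.2)
            + (1 - q ^ k) * ∑ p ∈ simplex k,
              c p * (u ^ p.1 * v ^ (p.2.1 + 1) * (1 - u - v) ^ p.2.2)
            + ∑ p ∈ simplex k,
              c p * (u ^ p.1 * v ^ p.2.1 * (1 - u - v) ^ (p.2.2 + 1)) := by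
            rw [hA, hB, hC]
        _ = (∑ p ∈ simplex k, c p * (u ^ p.1 * v ^ p.2.1 * (1 - u - v) ^ p.2.2)) *
              (1 - q ^ k * u - q ^ k * v) := by
            rw [Finset.mul_sum, Finset.mul_sum, ← Finset.sum_add_distrib,
              ← Finset.sum_add_distrib, Finset.sum_mul]
            exact Finset.sum_congr rfl (fun p _ => by ring)

lemma qInt_pos {q : ℝ} (hq : 0 < q) {r : ℕ} (hr : 0 < r) : 0 < qInt q r :=
  Finset.sum_pos (fun s _ => pow_pos hq s) (Finset.nonempty_range_iff.mpr hr.ne')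
lemma qFact_pos {q : ℝ} (hq : 0 < q) : ∀ r, 0 < qFact q r
  | 0 => by simp [qFact]
  | r + 1 => mul_pos (qInt_pos hq r.succ_pos) (qFact_pos hq r)
lemma qBinom_nonneg {q : ℝ} (hq : 0 < q) (i j : ℕ) : 0 ≤ qBinom q i j := by
  rw [qBinom]
  split
  · exact div_nonneg (qFact_pos hq i).le (mul_pos (qFact_pos hq j) (qFact_pos hq (i-j))).le
  · exact le_rfl

/-- each triangular q-Bernstein polynomial is a nonnegative combination of
    the classical triangular Bernstein polynomials of the same degree. -/
theorem stmt10 (q : ℝ) (hq0 : 0 < q) (hq1 : q < 1) (n : ℕ)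
    (i j k : ℕ) (hijk : i + j + k = n) :
    ∃ a : ℕ × ℕ × ℕ → ℝ, (∀ p ∈ simplex n, 0 ≤ a p) ∧
      ∀ u v : ℝ,
        triB q n i j k u v = ∑ p ∈ simplex n, a p * triBern n p.1 p.2.1 p.2.2 u v := by
  obtain ⟨c, hc0, hcz, hce⟩ := prod_expand q hq0 hq1 k
  set C : ℝ := qBinom q n k * (Nat.choose (i + j) i : ℝ) with hCdef
  have hC : 0 ≤ C := mul_nonneg (qBinom_nonneg hq0 n k) (Nat.cast_nonneg _)
  refine ⟨fun p => if i ≤ p.1 ∧ j ≤ p.2.1 then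
      C * c (p.1 - i, p.2.1 - j, p.2.2) *
        ((p.1.factorial : ℝ) * (p.2.1.factorial : ℝ) * (p.2.2.factorial : ℝ) /
          (n.factorial : ℝ)) else 0, ?_, ?_⟩
  · intro p _
    dsimp only
    split
    · exact mul_nonneg (mul_nonneg hC (hc0 _)) (by positivity)
    · exact le_rfl
  · intro u v
    have key := sum_shift_aux k n c
      (fun p => C * ((p.1.factorial : ℝ) * (p.2.1.factorial : ℝ) * (p.2.2.factorial : ℝ) /
          (n.factorial : ℝ)) * triBern n p.1 p.2.1 p.2.2 u v) hcz
      (fun p => (p.1 + i, p.2.1 + j, p.2.2)) (fun p => (p.1 - i, p.2.1 - j, p.2.2))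
      (fun p => i ≤ p.1 ∧ j ≤ p.2.1)
      (by intro p hp; rw [mem_simplex] at *; dsimp only; omega)
      (by rintro ⟨a, b, t⟩; dsimp only; simp)
      (by intro p; exact ⟨Nat.le_add_left _ _, Nat.le_add_left _ _⟩)
      (by rintro ⟨a, b, t⟩ ⟨h1, h2⟩; dsimp only at h1 h2 ⊢
          rw [Nat.sub_add_cancel h1, Nat.sub_add_cancel h2])
    have hpoint : ∀ p ∈ simplex k,
        c p * (C * (((p.1 + i).factorial : ℝ) * ((p.2.1 + j).factorial : ℝ) *
            ((p.2.2).factorial : ℝ) / (n.factorial : ℝ)) *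
          triBern n (p.1 + i) (p.2.1 + j) p.2.2 u v)
        = C * c p * (u ^ (p.1 + i) * v ^ (p.2.1 + j) * (1 - u - v) ^ p.2.2) := by
      intro p _
      rw [triBern]
      have h1 : (((p.1 + i).factorial : ℝ)) ≠ 0 := Nat.cast_ne_zero.2 (Nat.factorial_ne_zero _)
      have h2 : (((p.2.1 + j).factorial : ℝ)) ≠ 0 := Nat.cast_ne_zero.2 (Nat.factorial_ne_zero _)
      have h3 : (((p.2.2).factorial : ℝ)) ≠ 0 := Nat.cast_ne_zero.2 (Nat.factorial_ne_zero _)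
      have hn : ((n.factorial : ℝ)) ≠ 0 := Nat.cast_ne_zero.2 (Nat.factorial_ne_zero _)
      field_simp
    calc triB q n i j k u v
        = C * u ^ i * v ^ j * ∑ p ∈ simplex k,
            c p * (u ^ p.1 * v ^ p.2.1 * (1 - u - v) ^ p.2.2) := by
          rw [triB, hce u v]
      _ = ∑ p ∈ simplex k,
            C * c p * (u ^ (p.1 + i) * v ^ (p.2.1 + j) * (1 - u - v) ^ p.2.2) := by
          rw [Finset.mul_sum]
          exact Finset.sum_congr rfl (fun p _ => by ring)
      _ = ∑ p ∈ simplex k, c p *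
            (C * (((p.1 + i).factorial : ℝ) * ((p.2.1 + j).factorial : ℝ) *
                ((p.2.2).factorial : ℝ) / (n.factorial : ℝ)) *
              triBern n (p.1 + i) (p.2.1 + j) p.2.2 u v) :=
          (Finset.sum_congr rfl hpoint).symm
      _ = ∑ p ∈ simplex n, (if i ≤ p.1 ∧ j ≤ p.2.1 then c (p.1 - i, p.2.1 - j, p.2.2) else 0) *
            (C * ((p.1.factorial : ℝ) * (p.2.1.factorial : ℝ) * (p.2.2.factorial : ℝ) /
                (n.factorial : ℝ)) * triBern n p.1 p.2.1 p.2.2 u v) := key.symm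
      _ = ∑ p ∈ simplex n, (if i ≤ p.1 ∧ j ≤ p.2.1 then
            C * c (p.1 - i, p.2.1 - j, p.2.2) *
              ((p.1.factorial : ℝ) * (p.2.1.factorial : ℝ) * (p.2.2.factorial : ℝ) /
                (n.factorial : ℝ)) else 0) * triBern n p.1 p.2.1 p.2.2 u v := by
          refine Finset.sum_congr rfl (fun p _ => ?_)
          split
          · ring
          · simp
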